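/- For any q ∈ [1, ∞] and any h, g ∈ hS_*: ‖P(h) − P(g)‖_q ≤ S^{(K−1)/q} · K^{1−1/q} · max(‖P(h)‖_∞^{1−1/K}, ‖P(g)‖_∞^{1−1/K}) · d_q(CL(h), CL(g)). -/

import Mathlib

open scoped BigOperators ENNReal
open Finset

/-- Parameters of the network: `K` vectors in `ℝ^S`. -/
abbrev Params (K S : ℕ) := Fin K → Fin S → ℝ

/-- Order-`K` tensors with all sides of size `S`. -/
abbrev Tensor (K S : ℕ) := (Fin K → Fin S) → ℝ

/-- The Segre map: `P(h)_{i_1,…,i_K} = h_{1,i_1} ⋯ h_{K,i_K}`. -/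
noncomputable def Segre {K S : ℕ} (h : Params K S) : Tensor K S :=
  fun i => ∏ k, h k (i k)

/-- Parameters with all components nonzero. -/
def hSstar (K S : ℕ) : Set (Params K S) := {h | ∀ k, h k ≠ 0}

/-- The rescaling equivalence class of `h` (product of scales equal to `1`). -/
def CL {K S : ℕ} (h : Params K S) : Set (Params K S) :=
  {g | ∃ lam : Fin K → ℝ, (∏ k, lam k) = 1 ∧ ∀ k, g k = lam k • h k}

/-- Sup norm on `ℝ^S`. -/
noncomputable def supnorm {S : ℕ} (x : Fin S → ℝ) : ℝ := ⨆ i, |x i|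

/-- Parameters in `hSstar` whose components all have the same sup norm. -/
def hSdiag (K S : ℕ) : Set (Params K S) :=
  hSstar K S ∩ {h | ∀ k k' : Fin K, supnorm (h k) = supnorm (h k')}

/-- Entrywise `ℓ^p` norm, `p ∈ [1,∞]`. -/
noncomputable def pnorm (p : ℝ≥0∞) {ι : Type*} [Fintype ι] (x : ι → ℝ) : ℝ :=
  if p = ∞ then ⨆ i, |x i| else (∑ i, |x i| ^ p.toReal) ^ (1 / p.toReal)

/-- Flatten parameters into a vector of length `K·S`. -/
def flat {K S : ℕ} (h : Params K S) : Fin K × Fin S → ℝ := fun ki => h ki.1 ki.2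

/-- The distance `d_p` between rescaling classes, via representatives in `hSdiag`. -/
noncomputable def dDist {K S : ℕ} (p : ℝ≥0∞) (h g : Params K S) : ℝ :=
  sInf ((fun pr : Params K S × Params K S => pnorm p (flat pr.1 - flat pr.2)) ''
    {pr | pr.1 ∈ CL h ∩ hSdiag K S ∧ pr.2 ∈ CL g ∩ hSdiag K S})

/-! ### Auxiliary lemmas -/

lemma abs_le_supnorm {S : ℕ} (x : Fin S → ℝ) (i : Fin S) : |x i| ≤ supnorm x :=
  le_ciSup (f := fun i => |x i|) (Set.Finite.bddAbove (Set.finite_range _)) i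

lemma supnorm_nonneg {S : ℕ} (x : Fin S → ℝ) : 0 ≤ supnorm x :=
  Real.iSup_nonneg fun _ => abs_nonneg _

lemma supnorm_pos {S : ℕ} {x : Fin S → ℝ} (hx : x ≠ 0) : 0 < supnorm x := by
  obtain ⟨i, hi⟩ := Function.ne_iff.mp hx
  exact lt_of_lt_of_le (abs_pos.mpr hi) (abs_le_supnorm x i)

lemma supnorm_smul {S : ℕ} (c : ℝ) (x : Fin S → ℝ) :
    supnorm (c • x) = |c| * supnorm x := by
  unfold supnorm
  rw [Real.mul_iSup_of_nonneg (abs_nonneg c)]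
  congr 1; ext i
  simp [abs_mul]

lemma supnorm_attained {S : ℕ} (hS : 0 < S) (x : Fin S → ℝ) :
    ∃ i, supnorm x = |x i| := by
  haveI : Nonempty (Fin S) := Fin.pos_iff_nonempty.mp hS
  obtain ⟨i, hi⟩ := exists_eq_ciSup_of_finite (f := fun i : Fin S => |x i|)
  exact ⟨i, hi.symm⟩

lemma pnorm_top {ι : Type*} [Fintype ι] (x : ι → ℝ) : pnorm ⊤ x = ⨆ i, |x i| := by
  simp [pnorm]

lemma abs_le_pnorm_top {ι : Type*} [Fintype ι] (x : ι → ℝ) (i : ι) :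
    |x i| ≤ pnorm ⊤ x := by
  rw [pnorm_top]
  exact le_ciSup (f := fun i => |x i|) (Set.Finite.bddAbove (Set.finite_range _)) i

lemma pnorm_nonneg (p : ℝ≥0∞) {ι : Type*} [Fintype ι] (x : ι → ℝ) : 0 ≤ pnorm p x := by
  unfold pnorm
  by_cases hp : p = ∞
  · rw [if_pos hp]
    exact Real.iSup_nonneg fun _ => abs_nonneg _
  · rw [if_neg hp]
    exact Real.rpow_nonneg (Finset.sum_nonneg fun i _ =>
      Real.rpow_nonneg (abs_nonneg _) _) _

lemma pnorm_top_segre {K S : ℕ} (hS : 0 < S) (h : Params K S) :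
    pnorm ⊤ (Segre h) = ∏ k, supnorm (h k) := by
  haveI : Nonempty (Fin S) := Fin.pos_iff_nonempty.mp hS
  rw [pnorm_top]
  apply le_antisymm
  · apply ciSup_le
    intro i
    rw [Segre, Finset.abs_prod]
    exact Finset.prod_le_prod (fun k _ => abs_nonneg _) (fun k _ => abs_le_supnorm _ _)
  · choose j hj using fun k => supnorm_attained hS (h k)
    calc ∏ k, supnorm (h k) = ∏ k, |h k (j k)| := Finset.prod_congr rfl fun k _ => hj k
      _ = |Segre h j| := by rw [Segre, Finset.abs_prod]
      _ ≤ ⨆ i, |Segre h i| :=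
        le_ciSup (f := fun i => |Segre h i|) (Set.Finite.bddAbove (Set.finite_range _)) j

lemma segre_CL {K S : ℕ} {h g : Params K S} (hg : g ∈ CL h) : Segre g = Segre h := by
  obtain ⟨lam, hprod, hlam⟩ := hg
  funext i
  simp only [Segre]
  calc ∏ k, g k (i k) = ∏ k, lam k * h k (i k) := by
        refine Finset.prod_congr rfl fun k _ => ?_
        rw [hlam k]; rfl
    _ = (∏ k, lam k) * ∏ k, h k (i k) := by rw [Finset.prod_mul_distrib]
    _ = ∏ k, h k (i k) := by rw [hprod, one_mul]

lemma pnorm_top_segre_pos {K S : ℕ} (hS : 0 < S) {h : Params K S}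
    (hh : h ∈ hSstar K S) : 0 < pnorm ⊤ (Segre h) := by
  rw [pnorm_top_segre hS]
  exact Finset.prod_pos fun k _ => supnorm_pos (hh k)

/-- Telescoping bound for differences of products. -/
lemma prod_sub_prod_abs_le {ι : Type*} [DecidableEq ι] (a b : ι → ℝ) {c : ℝ} (hc : 0 ≤ c)
    (ha : ∀ k, |a k| ≤ c) (hb : ∀ k, |b k| ≤ c) (s : Finset ι) :
    |∏ k ∈ s, a k - ∏ k ∈ s, b k| ≤ (∑ k ∈ s, |a k - b k|) * c ^ (s.card - 1) := by
  induction s using Finset.induction_on with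
  | empty => simp
  | insert k s hks ih =>
    have hprodb : |∏ x ∈ s, b x| ≤ c ^ s.card := by
      rw [Finset.abs_prod]
      calc ∏ x ∈ s, |b x| ≤ ∏ x ∈ s, c :=
            Finset.prod_le_prod (fun x _ => abs_nonneg _) (fun x _ => hb x)
        _ = c ^ s.card := Finset.prod_const c
    rw [Finset.prod_insert hks, Finset.prod_insert hks, Finset.sum_insert hks]
    have key : a k * ∏ x ∈ s, a x - b k * ∏ x ∈ s, b x
        = a k * (∏ x ∈ s, a x - ∏ x ∈ s, b x) + (a k - b k) * ∏ x ∈ s, b x := by ring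
    rw [key]
    calc |a k * (∏ x ∈ s, a x - ∏ x ∈ s, b x) + (a k - b k) * ∏ x ∈ s, b x|
        ≤ |a k| * |∏ x ∈ s, a x - ∏ x ∈ s, b x| + |a k - b k| * |∏ x ∈ s, b x| := by
          refine (abs_add_le _ _).trans ?_
          rw [abs_mul, abs_mul]
      _ ≤ c * ((∑ x ∈ s, |a x - b x|) * c ^ (s.card - 1)) + |a k - b k| * c ^ s.card :=
          add_le_add (mul_le_mul (ha k) ih (abs_nonneg _) hc)
            (mul_le_mul_of_nonneg_left hprodb (abs_nonneg _))
      _ ≤ (∑ x ∈ s, |a x - b x|) * c ^ s.card + |a k - b k| * c ^ s.card := by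
          rcases Finset.eq_empty_or_nonempty s with rfl | hs
          · simp
          · have h1 : 1 ≤ s.card := Finset.card_pos.mpr hs
            have : c * ((∑ x ∈ s, |a x - b x|) * c ^ (s.card - 1))
                = (∑ x ∈ s, |a x - b x|) * (c ^ (s.card - 1) * c) := by ring
            rw [this, ← pow_succ, Nat.sub_add_cancel h1]
      _ = (|a k - b k| + ∑ x ∈ s, |a x - b x|) * c ^ ((insert k s).card - 1) := by
          rw [Finset.card_insert_of_notMem hks, Nat.add_sub_cancel]
          ring

/-- Power mean inequality: `(∑ f)^p ≤ K^(p-1) * ∑ f^p`. -/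
lemma sum_rpow_le {K : ℕ} (hK : 1 ≤ K) (f : Fin K → ℝ) (hf : ∀ k, 0 ≤ f k)
    {p : ℝ} (hp : 1 ≤ p) :
    (∑ k, f k) ^ p ≤ (K : ℝ) ^ (p - 1) * ∑ k, f k ^ p := by
  have hKpos : (0 : ℝ) < K := by exact_mod_cast hK
  have h1 : ∑ _k : Fin K, (K : ℝ)⁻¹ = 1 := by
    rw [Finset.sum_const, Finset.card_univ, Fintype.card_fin, nsmul_eq_mul]
    field_simp
  have h2 := Real.rpow_arith_mean_le_arith_mean_rpow Finset.univ (fun _ => (K : ℝ)⁻¹) f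
    (fun _ _ => by positivity) h1 (fun k _ => hf k) hp
  rw [← Finset.mul_sum, ← Finset.mul_sum,
    Real.mul_rpow (by positivity) (Finset.sum_nonneg fun k _ => hf k)] at h2
  calc (∑ k, f k) ^ p = (K : ℝ) ^ p * ((K : ℝ)⁻¹ ^ p * (∑ k, f k) ^ p) := by
        rw [← mul_assoc, ← Real.mul_rpow hKpos.le (by positivity),
          mul_inv_cancel₀ hKpos.ne', Real.one_rpow, one_mul]
    _ ≤ (K : ℝ) ^ p * ((K : ℝ)⁻¹ * ∑ k, f k ^ p) :=
        mul_le_mul_of_nonneg_left h2 (Real.rpow_nonneg hKpos.le p)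
    _ = (K : ℝ) ^ (p - 1) * ∑ k, f k ^ p := by
        rw [← mul_assoc]
        congr 1
        rw [show (K : ℝ)⁻¹ = (K : ℝ) ^ (-1 : ℝ) by rw [Real.rpow_neg_one],
          ← Real.rpow_add hKpos, sub_eq_add_neg]

/-- Summing a function of one slot over all multi-indices. -/
lemma sum_slice {K S : ℕ} (k : Fin K) (F : Fin S → ℝ) :
    ∑ i : Fin K → Fin S, F (i k) = ((S : ℝ) ^ (K - 1)) * ∑ j : Fin S, F j := by
  classical
  rw [← (Equiv.funSplitAt k (Fin S)).symm.sum_comp (fun i => F (i k))]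
  have happ : ∀ p : Fin S × ({j // j ≠ k} → Fin S),
      ((Equiv.funSplitAt k (Fin S)).symm p) k = p.1 := by
    intro p
    simp [Equiv.funSplitAt, Equiv.piSplitAt]
  rw [Fintype.sum_prod_type]
  have hcard : Fintype.card ({j // j ≠ k} → Fin S) = S ^ (K - 1) := by
    rw [Fintype.card_fun, Fintype.card_fin]
    congr 1
    have : Fintype.card {j : Fin K // j ≠ k} = K - 1 := by
      simp [Fintype.card_subtype_compl]
    rw [this]
  calc ∑ x : Fin S, ∑ y : {j // j ≠ k} → Fin S,
        F (((Equiv.funSplitAt k (Fin S)).symm (x, y)) k)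
      = ∑ x : Fin S, ∑ _y : {j // j ≠ k} → Fin S, F x := by
        refine Finset.sum_congr rfl fun x _ => Finset.sum_congr rfl fun y _ => ?_
        rw [happ (x, y)]
    _ = ∑ x : Fin S, (S ^ (K - 1) : ℕ) • F x := by
        refine Finset.sum_congr rfl fun x _ => ?_
        rw [Finset.sum_const, Finset.card_univ, hcard]
    _ = (S ^ (K - 1) : ℕ) • ∑ j : Fin S, F j := Finset.smul_sum.symm
    _ = ((S : ℝ) ^ (K - 1)) * ∑ j : Fin S, F j := by
        rw [nsmul_eq_mul]; push_cast; ring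

lemma max_pow_eq {a b : ℝ} (ha : 0 ≤ a) (hb : 0 ≤ b) (n : ℕ) :
    max (a ^ n) (b ^ n) = (max a b) ^ n := by
  rcases le_total a b with hab | hab
  · rw [max_eq_right hab, max_eq_right (pow_le_pow_left₀ ha hab n)]
  · rw [max_eq_left hab, max_eq_left (pow_le_pow_left₀ hb hab n)]


/-- Core inequality for balanced representatives. -/
lemma segre_core {K S : ℕ} (hK : 1 ≤ K) (hS : 2 ≤ S)
    (q : ℝ≥0∞) (hq : 1 ≤ q)
    (h' g' : Params K S) (hh' : h' ∈ hSdiag K S) (hg' : g' ∈ hSdiag K S) :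
    pnorm q (Segre h' - Segre g') ≤
      (S : ℝ) ^ (((K : ℝ) - 1) / q.toReal) * (K : ℝ) ^ ((1 : ℝ) - 1 / q.toReal) *
        max ((pnorm ⊤ (Segre h')) ^ ((1 : ℝ) - 1 / (K : ℝ)))
            ((pnorm ⊤ (Segre g')) ^ ((1 : ℝ) - 1 / (K : ℝ))) *
        pnorm q (flat h' - flat g') := by
  have hS0 : 0 < S := by omega
  haveI : Nonempty (Fin S) := Fin.pos_iff_nonempty.mp hS0
  haveI : Nonempty (Fin K) := Fin.pos_iff_nonempty.mp hK
  set k0 : Fin K := ⟨0, hK⟩ with hk0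
  set a := supnorm (h' k0) with hadef
  set b := supnorm (g' k0) with hbdef
  have ha : ∀ k, supnorm (h' k) = a := fun k => hh'.2 k k0
  have hb : ∀ k, supnorm (g' k) = b := fun k => hg'.2 k k0
  have hapos : 0 < a := supnorm_pos (hh'.1 k0)
  have hbpos : 0 < b := supnorm_pos (hg'.1 k0)
  set c := max a b with hcdef
  have hcpos : 0 < c := lt_max_of_lt_left hapos
  have hPh : pnorm ⊤ (Segre h') = a ^ K := by
    rw [pnorm_top_segre hS0, Finset.prod_congr rfl (fun k _ => ha k), Finset.prod_const,
      Finset.card_univ, Fintype.card_fin]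
  have hPg : pnorm ⊤ (Segre g') = b ^ K := by
    rw [pnorm_top_segre hS0, Finset.prod_congr rfl (fun k _ => hb k), Finset.prod_const,
      Finset.card_univ, Fintype.card_fin]
  have hKne : (K : ℝ) ≠ 0 := by positivity
  have hexp : ∀ x : ℝ, 0 < x → (x ^ K) ^ ((1:ℝ) - 1/(K:ℝ)) = x ^ (K - 1) := by
    intro x hx
    rw [← Real.rpow_natCast x K, ← Real.rpow_mul hx.le, ← Real.rpow_natCast x (K-1)]
    congr 1
    rw [Nat.cast_sub hK, Nat.cast_one]
    field_simp
  have hmax : max ((pnorm ⊤ (Segre h')) ^ ((1:ℝ) - 1/(K:ℝ)))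
      ((pnorm ⊤ (Segre g')) ^ ((1:ℝ) - 1/(K:ℝ))) = c ^ (K - 1) := by
    rw [hPh, hPg, hexp a hapos, hexp b hbpos, max_pow_eq hapos.le hbpos.le]
  have key : ∀ i : Fin K → Fin S,
      |(Segre h' - Segre g') i| ≤ (∑ k, |(flat h' - flat g') (k, i k)|) * c ^ (K - 1) := by
    intro i
    have hA : ∀ k, |h' k (i k)| ≤ c :=
      fun k => le_trans (le_of_le_of_eq (abs_le_supnorm _ _) (ha k)) (le_max_left a b)
    have hB : ∀ k, |g' k (i k)| ≤ c :=
      fun k => le_trans (le_of_le_of_eq (abs_le_supnorm _ _) (hb k)) (le_max_right a b)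
    have := prod_sub_prod_abs_le (fun k => h' k (i k)) (fun k => g' k (i k)) hcpos.le hA hB
      Finset.univ
    simpa [Segre, flat, Pi.sub_apply, Finset.card_univ] using this
  rw [hmax]
  by_cases hqt : q = ∞
  · subst hqt
    have hbound : pnorm ⊤ (Segre h' - Segre g') ≤
        (K : ℝ) * c ^ (K - 1) * pnorm ⊤ (flat h' - flat g') := by
      rw [pnorm_top]
      apply ciSup_le
      intro i
      calc |(Segre h' - Segre g') i|
          ≤ (∑ k, |(flat h' - flat g') (k, i k)|) * c ^ (K - 1) := key i
        _ ≤ (∑ _k : Fin K, pnorm ⊤ (flat h' - flat g')) * c ^ (K - 1) := by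
            apply mul_le_mul_of_nonneg_right _ (pow_nonneg hcpos.le _)
            exact Finset.sum_le_sum fun k _ => abs_le_pnorm_top _ _
        _ = (K : ℝ) * pnorm ⊤ (flat h' - flat g') * c ^ (K - 1) := by
            rw [Finset.sum_const, Finset.card_univ, Fintype.card_fin, nsmul_eq_mul]
        _ = (K : ℝ) * c ^ (K - 1) * pnorm ⊤ (flat h' - flat g') := by ring
    rw [ENNReal.toReal_top]
    simp only [div_zero, Real.rpow_zero, one_mul, sub_zero, Real.rpow_one]
    linarith [hbound]
  · have hp1 : (1:ℝ) ≤ q.toReal := by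
      have := ENNReal.toReal_mono hqt hq
      simpa using this
    set p := q.toReal with hpdef
    have hp0 : (0:ℝ) < p := lt_of_lt_of_le one_pos hp1
    simp only [pnorm, if_neg hqt]
    have hNnn : (0:ℝ) ≤ ∑ ki : Fin K × Fin S, |(flat h' - flat g') ki| ^ p :=
      Finset.sum_nonneg fun ki _ => Real.rpow_nonneg (abs_nonneg _) _
    set N := ∑ ki : Fin K × Fin S, |(flat h' - flat g') ki| ^ p with hN
    have hterm : ∀ i : Fin K → Fin S, |(Segre h' - Segre g') i| ^ p ≤
        (K:ℝ)^(p-1) * (∑ k, |(flat h' - flat g') (k, i k)| ^ p) * (c^(K-1):ℝ)^p := by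
      intro i
      calc |(Segre h' - Segre g') i| ^ p
          ≤ ((∑ k, |(flat h' - flat g') (k, i k)|) * c ^ (K - 1)) ^ p :=
            Real.rpow_le_rpow (abs_nonneg _) (key i) hp0.le
        _ = (∑ k, |(flat h' - flat g') (k, i k)|) ^ p * (c^(K-1):ℝ)^p :=
            Real.mul_rpow (Finset.sum_nonneg fun k _ => abs_nonneg _) (pow_nonneg hcpos.le _)
        _ ≤ ((K:ℝ)^(p-1) * ∑ k, |(flat h' - flat g') (k, i k)| ^ p) * (c^(K-1):ℝ)^p :=
            mul_le_mul_of_nonneg_right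
              (sum_rpow_le hK _ (fun k => abs_nonneg _) hp1)
              (Real.rpow_nonneg (pow_nonneg hcpos.le _) _)
        _ = (K:ℝ)^(p-1) * (∑ k, |(flat h' - flat g') (k, i k)| ^ p) * (c^(K-1):ℝ)^p := by
            ring
    have hslice : ∑ i : Fin K → Fin S, ∑ k, |(flat h' - flat g') (k, i k)| ^ p
        = (S:ℝ)^(K-1) * N := by
      rw [Finset.sum_comm]
      calc ∑ k, ∑ i : Fin K → Fin S, |(flat h' - flat g') (k, i k)| ^ p
          = ∑ k : Fin K, (S:ℝ)^(K-1) * ∑ j, |(flat h' - flat g') (k, j)| ^ p :=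
            Finset.sum_congr rfl fun k _ =>
              sum_slice k (fun j => |(flat h' - flat g') (k, j)| ^ p)
        _ = (S:ℝ)^(K-1) * ∑ k : Fin K, ∑ j, |(flat h' - flat g') (k, j)| ^ p :=
            (Finset.mul_sum _ _ _).symm
        _ = (S:ℝ)^(K-1) * N := by rw [hN, Fintype.sum_prod_type]
    have hsum : ∑ i : Fin K → Fin S, |(Segre h' - Segre g') i| ^ p ≤
        (K:ℝ)^(p-1) * ((S:ℝ)^(K-1) * N) * (c^(K-1):ℝ)^p := by
      calc ∑ i : Fin K → Fin S, |(Segre h' - Segre g') i| ^ p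
          ≤ ∑ i : Fin K → Fin S,
              (K:ℝ)^(p-1) * (∑ k, |(flat h' - flat g') (k, i k)| ^ p) * (c^(K-1):ℝ)^p :=
            Finset.sum_le_sum fun i _ => hterm i
        _ = (K:ℝ)^(p-1) * (∑ i : Fin K → Fin S, ∑ k, |(flat h' - flat g') (k, i k)| ^ p)
              * (c^(K-1):ℝ)^p := by
            rw [← Finset.sum_mul, ← Finset.mul_sum]
        _ = (K:ℝ)^(p-1) * ((S:ℝ)^(K-1) * N) * (c^(K-1):ℝ)^p := by rw [hslice]
    have e1 : ((K:ℝ)^(p-1)) ^ (1/p) = (K:ℝ)^(1 - 1/p) := by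
      rw [← Real.rpow_mul (Nat.cast_nonneg K), mul_one_div, sub_div, div_self hp0.ne']
    have e2 : ((S:ℝ)^(K-1)) ^ (1/p) = (S:ℝ)^(((K:ℝ)-1)/p) := by
      rw [← Real.rpow_natCast (S:ℝ) (K-1), ← Real.rpow_mul (Nat.cast_nonneg S),
        Nat.cast_sub hK, Nat.cast_one, mul_one_div]
    have e3 : ((c^(K-1):ℝ)^p) ^ (1/p) = c^(K-1) := by
      rw [← Real.rpow_mul (pow_nonneg hcpos.le _), mul_one_div, div_self hp0.ne',
        Real.rpow_one]
    have h1 : (0:ℝ) ≤ (K:ℝ)^(p-1) := Real.rpow_nonneg (Nat.cast_nonneg K) _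
    have h2 : (0:ℝ) ≤ (S:ℝ)^(K-1) := pow_nonneg (Nat.cast_nonneg S) _
    have h3 : (0:ℝ) ≤ (c^(K-1):ℝ) := pow_nonneg hcpos.le _
    have hfact : ((K:ℝ)^(p-1) * ((S:ℝ)^(K-1) * N) * (c^(K-1):ℝ)^p) ^ (1/p)
        = (K:ℝ)^(1 - 1/p) * ((S:ℝ)^(((K:ℝ)-1)/p) * N ^ (1/p)) * c^(K-1) := by
      rw [Real.mul_rpow (mul_nonneg h1 (mul_nonneg h2 hNnn)) (Real.rpow_nonneg h3 _),
        Real.mul_rpow h1 (mul_nonneg h2 hNnn), Real.mul_rpow h2 hNnn, e1, e2, e3]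
    calc (∑ i : Fin K → Fin S, |(Segre h' - Segre g') i| ^ p) ^ (1/p)
        ≤ ((K:ℝ)^(p-1) * ((S:ℝ)^(K-1) * N) * (c^(K-1):ℝ)^p) ^ (1/p) :=
          Real.rpow_le_rpow
            (Finset.sum_nonneg fun i _ => Real.rpow_nonneg (abs_nonneg _) _) hsum
            (by positivity)
      _ = (K:ℝ)^(1 - 1/p) * ((S:ℝ)^(((K:ℝ)-1)/p) * N ^ (1/p)) * c^(K-1) := hfact
      _ = (S:ℝ)^(((K:ℝ)-1)/p) * (K:ℝ)^((1:ℝ) - 1/p) * c^(K-1) * N ^ (1/p) := by ring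


/-- Existence of a balanced representative. -/
lemma rep_exists {K S : ℕ} (hK : 1 ≤ K) (hS : 0 < S) (h : Params K S)
    (hh : h ∈ hSstar K S) : ∃ h', h' ∈ CL h ∩ hSdiag K S := by
  have hsk : ∀ k, 0 < supnorm (h k) := fun k => supnorm_pos (hh k)
  have hprodpos : 0 < ∏ k, supnorm (h k) := Finset.prod_pos fun k _ => hsk k
  set a : ℝ := (∏ k, supnorm (h k)) ^ ((K:ℝ)⁻¹) with hadef
  have hapos : 0 < a := Real.rpow_pos_of_pos hprodpos _
  have hKne : (K:ℝ) ≠ 0 := by positivity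
  refine ⟨fun k => (a / supnorm (h k)) • h k,
    ⟨⟨fun k => a / supnorm (h k), ?_, fun k => rfl⟩, ?_, ?_⟩⟩
  · rw [Finset.prod_div_distrib, Finset.prod_const, Finset.card_univ, Fintype.card_fin,
      hadef, ← Real.rpow_natCast ((∏ k, supnorm (h k)) ^ ((K:ℝ)⁻¹)) K,
      ← Real.rpow_mul hprodpos.le, inv_mul_cancel₀ hKne, Real.rpow_one,
      div_self hprodpos.ne']
  · intro k
    exact smul_ne_zero (div_ne_zero hapos.ne' (hsk k).ne') (hh k)
  · intro k k'
    have hsn : ∀ k, supnorm ((a / supnorm (h k)) • h k) = a := by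
      intro k
      rw [supnorm_smul, abs_of_pos (div_pos hapos (hsk k)), div_mul_cancel₀ _ (hsk k).ne']
    rw [hsn k, hsn k']

/-- "Lipschitz continuity" of the Segre map `P` with respect to `d_q`. -/
theorem segre_lipschitz {K S : ℕ} (hK : 1 ≤ K) (hS : 2 ≤ S)
    (q : ℝ≥0∞) (hq : 1 ≤ q)
    (h g : Params K S) (hh : h ∈ hSstar K S) (hg : g ∈ hSstar K S) :
    pnorm q (Segre h - Segre g) ≤
      (S : ℝ) ^ (((K : ℝ) - 1) / q.toReal) * (K : ℝ) ^ ((1 : ℝ) - 1 / q.toReal) *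
        max ((pnorm ⊤ (Segre h)) ^ ((1 : ℝ) - 1 / (K : ℝ)))
            ((pnorm ⊤ (Segre g)) ^ ((1 : ℝ) - 1 / (K : ℝ))) *
        dDist q h g := by
  have hS0 : 0 < S := by omega
  obtain ⟨h₀, hh₀⟩ := rep_exists hK hS0 h hh
  obtain ⟨g₀, hg₀⟩ := rep_exists hK hS0 g hg
  set C := (S : ℝ) ^ (((K : ℝ) - 1) / q.toReal) * (K : ℝ) ^ ((1 : ℝ) - 1 / q.toReal) *
        max ((pnorm ⊤ (Segre h)) ^ ((1 : ℝ) - 1 / (K : ℝ)))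
            ((pnorm ⊤ (Segre g)) ^ ((1 : ℝ) - 1 / (K : ℝ))) with hC
  have hCpos : 0 < C := by
    apply mul_pos (mul_pos _ _)
    · exact lt_max_of_lt_left
        (Real.rpow_pos_of_pos (pnorm_top_segre_pos hS0 hh) _)
    · exact Real.rpow_pos_of_pos (by exact_mod_cast hS0) _
    · exact Real.rpow_pos_of_pos (by exact_mod_cast hK) _
  have hmem : pnorm q (flat h₀ - flat g₀) ∈
      ((fun pr : Params K S × Params K S => pnorm q (flat pr.1 - flat pr.2)) ''
        {pr | pr.1 ∈ CL h ∩ hSdiag K S ∧ pr.2 ∈ CL g ∩ hSdiag K S}) :=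
    ⟨(h₀, g₀), ⟨hh₀, hg₀⟩, rfl⟩
  have hbound : ∀ x ∈ ((fun pr : Params K S × Params K S =>
      pnorm q (flat pr.1 - flat pr.2)) ''
        {pr | pr.1 ∈ CL h ∩ hSdiag K S ∧ pr.2 ∈ CL g ∩ hSdiag K S}),
      pnorm q (Segre h - Segre g) ≤ C * x := by
    rintro x ⟨⟨h', g'⟩, ⟨hh', hg'⟩, rfl⟩
    have e1 : Segre h' = Segre h := segre_CL hh'.1
    have e2 : Segre g' = Segre g := segre_CL hg'.1
    have := segre_core hK hS q hq h' g' hh'.2 hg'.2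
    rw [e1, e2] at this
    exact this
  have h1 : pnorm q (Segre h - Segre g) / C ≤ dDist q h g := by
    apply le_csInf ⟨_, hmem⟩
    intro x hx
    rw [div_le_iff₀ hCpos]
    exact (hbound x hx).trans_eq (mul_comm C x)
  calc pnorm q (Segre h - Segre g)
      = pnorm q (Segre h - Segre g) / C * C := by field_simp
    _ ≤ dDist q h g * C := mul_le_mul_of_nonneg_right h1 hCpos.le
    _ = C * dDist q h g := mul_comm _ _
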